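/- arXiv:2103.13490 — 2 statements merged into one kernel-verified Lean document; each statement's English description precedes it below -/
import Mathlib

section
/- In the PO2PLS model, if r + r_x < p, the matrix [W W⊥] has full column rank, and Σ_t, Σ_{t⊥} have positive diagonal entries, then σ_e² is the smallest eigenvalue of Cov(x) = W Σ_t Wᵀ + W⊥ Σ_{t⊥} W⊥ᵀ + σ_e² I_p, and the eigenvalue σ_e² has multiplicity at least p − (r + r_x). In particular, σ_e² is identified from Cov(x). -/
open Matrix

/-- If `r + r_x < p`, `[W W⊥]` has full column rank, and `Σ_t, Σ_{t⊥}` are diagonal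
positive definite, then `σ_e²` is the smallest eigenvalue of
`Cov(x) = W Σ_t Wᵀ + W⊥ Σ_{t⊥} W⊥ᵀ + σ_e² I_p`, with multiplicity at least
`p − (r + r_x)`; in particular `σ_e²` is identified from `Cov(x)`. -/
theorem stmt_10 (p r rx : ℕ) (hdim : r + rx < p)
    (W : Matrix (Fin p) (Fin r) ℝ) (Wo : Matrix (Fin p) (Fin rx) ℝ)
    (st : Fin r → ℝ) (sto : Fin rx → ℝ) (se2 : ℝ)
    (hrank : (Matrix.fromCols W Wo).rank = r + rx)
    (hst : ∀ k, 0 < st k) (hsto : ∀ k, 0 < sto k) (hse : 0 < se2)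
    (Sx : Matrix (Fin p) (Fin p) ℝ)
    (hSx : Sx = W * Matrix.diagonal st * Wᵀ + Wo * Matrix.diagonal sto * Woᵀ
        + se2 • (1 : Matrix (Fin p) (Fin p) ℝ)) :
    se2 ∈ spectrum ℝ Sx ∧
      (∀ μ ∈ spectrum ℝ Sx, se2 ≤ μ) ∧
      p - (r + rx) ≤ Module.finrank ℝ
        (LinearMap.ker (Sx - se2 • (1 : Matrix (Fin p) (Fin p) ℝ)).mulVecLin) := by
  set C : Matrix (Fin p) (Fin r ⊕ Fin rx) ℝ := Matrix.fromCols W Wo with hC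
  set d : Fin r ⊕ Fin rx → ℝ := Sum.elim st sto with hd
  set M : Matrix (Fin p) (Fin p) ℝ := Sx - se2 • (1 : Matrix (Fin p) (Fin p) ℝ) with hMdef
  have hM : M = C * Matrix.diagonal d * Cᵀ := by
    rw [hMdef, hSx, hC, hd, ← Matrix.fromBlocks_diagonal, Matrix.fromCols_mul_fromBlocks,
      Matrix.transpose_fromCols, Matrix.fromCols_mul_fromRows]
    simp
  -- PSD of M
  have hdpsd : (Matrix.diagonal d).PosSemidef := by
    refine Matrix.posSemidef_diagonal_iff.mpr ?_
    rintro (i | i)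
    · exact (hst i).le
    · exact (hsto i).le
  have hMpsd : M.PosSemidef := by
    rw [hM]
    simpa using hdpsd.mul_mul_conjTranspose_same C
  -- kernel bound
  have hker : LinearMap.ker (Cᵀ).mulVecLin ≤ LinearMap.ker M.mulVecLin := by
    intro v hv
    rw [LinearMap.mem_ker] at hv ⊢
    simp only [hM, Matrix.mulVecLin_mul, LinearMap.comp_apply, hv, map_zero]
  have hkerC : Module.finrank ℝ (LinearMap.ker (Cᵀ).mulVecLin) = p - (r + rx) := by
    have h1 := LinearMap.finrank_range_add_finrank_ker (Cᵀ).mulVecLin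
    have h2 : Module.finrank ℝ (LinearMap.range (Cᵀ).mulVecLin) = r + rx := by
      have : (Cᵀ).rank = r + rx := by rw [Matrix.rank_transpose, hrank]
      simpa [Matrix.rank] using this
    have h3 : Module.finrank ℝ ((Fin p) → ℝ) = p := by simp
    omega
  have hkerM : p - (r + rx) ≤ Module.finrank ℝ (LinearMap.ker M.mulVecLin) := by
    rw [← hkerC]
    exact Submodule.finrank_mono hker
  -- nonzero kernel vector
  have hkerne : LinearMap.ker M.mulVecLin ≠ ⊥ := by
    intro h
    rw [h] at hkerM
    simp at hkerM
    omega
  obtain ⟨v, hvmem, hvne⟩ := Submodule.exists_mem_ne_zero_of_ne_bot hkerne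
  have hvM : M.mulVec v = 0 := hvmem
  have hSv : Sx.mulVec v = se2 • v := by
    have : Sx = M + se2 • (1 : Matrix (Fin p) (Fin p) ℝ) := by rw [hMdef]; abel
    rw [this, Matrix.add_mulVec, hvM, Matrix.smul_mulVec, Matrix.one_mulVec]
    simp
  -- spectrum via eigenvalues of toLin'
  have hspec : ∀ μ : ℝ, μ ∈ spectrum ℝ Sx ↔
      Module.End.HasEigenvalue (Matrix.toLin' Sx) μ := by
    intro μ
    rw [← AlgEquiv.spectrum_eq (Matrix.toLinAlgEquiv <| Pi.basisFun ℝ (Fin p)) Sx,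
      ← Module.End.hasEigenvalue_iff_mem_spectrum]
    rfl
  refine ⟨?_, ?_, hkerM⟩
  · rw [hspec]
    exact Module.End.hasEigenvalue_of_hasEigenvector
      ⟨Module.End.mem_eigenspace_iff.mpr (by simpa [Matrix.toLin'_apply] using hSv), hvne⟩
  · intro μ hμ
    rw [hspec] at hμ
    obtain ⟨w, hwvec⟩ := hμ.exists_hasEigenvector
    have hwne : w ≠ 0 := hwvec.2
    have hw : Sx.mulVec w = μ • w := by
      simpa [Matrix.toLin'_apply] using hwvec.apply_eq_smul
    have hMw : M.mulVec w = (μ - se2) • w := by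
      rw [hMdef, Matrix.sub_mulVec, hw, Matrix.smul_mulVec, Matrix.one_mulVec, sub_smul]
    have hpos : 0 < w ⬝ᵥ w := by
      have hnn : 0 ≤ w ⬝ᵥ w := Finset.sum_nonneg fun i _ => mul_self_nonneg (w i)
      rcases lt_or_eq_of_le hnn with h | h
      · exact h
      · exact absurd (dotProduct_self_eq_zero.mp h.symm) hwne
    have hnn : 0 ≤ (μ - se2) * (w ⬝ᵥ w) := by
      have := hMpsd.dotProduct_mulVec_nonneg w
      simpa [hMw, dotProduct_smul, smul_eq_mul] using this
    nlinarith
end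

section
/- Under the PO2PLS identifiability conditions, the parameters Σ_t B (hence, given the ordering convention, the products σ²_{t_k} b_k) are uniquely determined by the cross-covariance Σ_{xy} = W Σ_t B Cᵀ: if W₁ Σ_{t,1} B₁ C₁ᵀ = W₂ Σ_{t,2} B₂ C₂ᵀ with Wᵢ, Cᵢ semi-orthogonal p×r resp. q×r, Σ_{t,i} diagonal positive, Bᵢ diagonal positive, and the diagonal of Σ_{t,i} Bᵢ strictly decreasing, then Σ_{t,1} B₁ = Σ_{t,2} B₂ and there is a sign matrix Δ with W₁ = W₂Δ, C₁ = C₂Δ. -/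
open Matrix

lemma aux_sign_perm {r : ℕ} (A : Matrix (Fin r) (Fin r) ℝ) (d1 d2 : Fin r → ℝ)
    (hdec1 : StrictAnti d1) (hdec2 : StrictAnti d2)
    (h1 : Aᵀ * A = 1)
    (hzero : ∀ i j, A i j ≠ 0 → d2 i = d1 j) :
    d1 = d2 ∧ (∀ i j, i ≠ j → A i j = 0) ∧ ∀ i, A i i = 1 ∨ A i i = -1 := by
  have h2 : A * Aᵀ = 1 := mul_eq_one_comm.mp h1
  have hrow : ∀ i, ∑ j, A i j * A i j = 1 := by
    intro i
    have := congrFun (congrFun h2 i) i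
    simpa [Matrix.mul_apply, Matrix.transpose_apply, Matrix.one_apply] using this
  have hex : ∀ i, ∃ j, A i j ≠ 0 := by
    intro i
    by_contra hc
    push_neg at hc
    have := hrow i
    simp [hc] at this
  choose σ hσ using hex
  have hd : ∀ i, d2 i = d1 (σ i) := fun i => hzero i (σ i) (hσ i)
  have huniq : ∀ i j, A i j ≠ 0 → j = σ i := by
    intro i j hj
    exact hdec1.injective ((hzero i j hj).symm.trans (hd i))
  have hmono : StrictMono σ := by
    intro a b hab
    have h : d1 (σ b) < d1 (σ a) := by
      rw [← hd a, ← hd b]; exact hdec2 hab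
    exact hdec1.lt_iff_gt.mp h
  haveI : WellFoundedLT (Fin r) := inferInstance
  have hσid : σ = id := by
    have hsurj : Function.Surjective σ :=
      Finite.surjective_of_injective hmono.injective
    exact (StrictMono.range_inj (β := Fin r) (γ := Fin r) hmono strictMono_id).1
      (by rw [Set.range_id, hsurj.range_eq])
  have hdiag : ∀ i j, i ≠ j → A i j = 0 := by
    intro i j hij
    by_contra h
    exact hij (((huniq i j h).trans (by rw [hσid]; rfl)).symm)
  refine ⟨funext fun i => ?_, hdiag, fun i => ?_⟩
  · rw [hd i, hσid]; rfl
  · have h := hrow i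
    rw [Finset.sum_eq_single i] at h
    · exact mul_self_eq_one_iff.mp h
    · intro b _ hb
      rw [hdiag i b (Ne.symm hb), mul_zero]
    · intro h'; exact absurd (Finset.mem_univ i) h'

/-- Under the PO2PLS identifiability conditions, `Σ_t B` is uniquely determined by
the cross-covariance `Σ_{xy} = W Σ_t B Cᵀ`: equal cross-covariances force
`Σ_{t,1} B₁ = Σ_{t,2} B₂` and `W₁ = W₂ Δ`, `C₁ = C₂ Δ` for a sign matrix `Δ`. -/
theorem stmt_17 (p q r : ℕ) (hp : r ≤ p) (hq : r ≤ q)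
    (W1 W2 : Matrix (Fin p) (Fin r) ℝ) (C1 C2 : Matrix (Fin q) (Fin r) ℝ)
    (st1 st2 b1 b2 : Fin r → ℝ)
    (hW1 : W1ᵀ * W1 = 1) (hW2 : W2ᵀ * W2 = 1)
    (hC1 : C1ᵀ * C1 = 1) (hC2 : C2ᵀ * C2 = 1)
    (hst1 : ∀ k, 0 < st1 k) (hst2 : ∀ k, 0 < st2 k)
    (hb1 : ∀ k, 0 < b1 k) (hb2 : ∀ k, 0 < b2 k)
    (hdec1 : StrictAnti (fun k => st1 k * b1 k))
    (hdec2 : StrictAnti (fun k => st2 k * b2 k))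
    (heq : W1 * Matrix.diagonal st1 * Matrix.diagonal b1 * C1ᵀ
        = W2 * Matrix.diagonal st2 * Matrix.diagonal b2 * C2ᵀ) :
    Matrix.diagonal st1 * Matrix.diagonal b1 = Matrix.diagonal st2 * Matrix.diagonal b2 ∧
      ∃ ε : Fin r → ℝ, (∀ k, ε k = 1 ∨ ε k = -1) ∧
        W1 = W2 * Matrix.diagonal ε ∧ C1 = C2 * Matrix.diagonal ε := by
  classical
  set d1 : Fin r → ℝ := fun k => st1 k * b1 k with hd1def
  set d2 : Fin r → ℝ := fun k => st2 k * b2 k with hd2def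
  have hd1pos : ∀ k, 0 < d1 k := fun k => mul_pos (hst1 k) (hb1 k)
  have hd2pos : ∀ k, 0 < d2 k := fun k => mul_pos (hst2 k) (hb2 k)
  have hD1 : Matrix.diagonal st1 * Matrix.diagonal b1 = Matrix.diagonal d1 := by
    rw [Matrix.diagonal_mul_diagonal]
  have hD2 : Matrix.diagonal st2 * Matrix.diagonal b2 = Matrix.diagonal d2 := by
    rw [Matrix.diagonal_mul_diagonal]
  have heq' : W1 * Matrix.diagonal d1 * C1ᵀ = W2 * Matrix.diagonal d2 * C2ᵀ := by
    rw [Matrix.mul_assoc W1 (Matrix.diagonal st1), hD1] at heq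
    rw [Matrix.mul_assoc W2 (Matrix.diagonal st2), hD2] at heq
    exact heq
  -- cancellation helpers
  have cw1 : ∀ {n : Type} [Fintype n] (X : Matrix (Fin r) n ℝ), W1ᵀ * (W1 * X) = X := by
    intro n _ X; rw [← Matrix.mul_assoc, hW1, Matrix.one_mul]
  have cw2 : ∀ {n : Type} [Fintype n] (X : Matrix (Fin r) n ℝ), W2ᵀ * (W2 * X) = X := by
    intro n _ X; rw [← Matrix.mul_assoc, hW2, Matrix.one_mul]
  have cc2 : ∀ {n : Type} [Fintype n] (X : Matrix (Fin r) n ℝ), C2ᵀ * (C2 * X) = X := by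
    intro n _ X; rw [← Matrix.mul_assoc, hC2, Matrix.one_mul]
  set A : Matrix (Fin r) (Fin r) ℝ := W2ᵀ * W1 with hAdef
  set B : Matrix (Fin r) (Fin r) ℝ := C2ᵀ * C1 with hBdef
  have heqT : C1 * (Matrix.diagonal d1 * W1ᵀ) = C2 * (Matrix.diagonal d2 * W2ᵀ) := by
    have h := congrArg Matrix.transpose heq'
    simpa [Matrix.transpose_mul, Matrix.diagonal_transpose, Matrix.mul_assoc] using h
  -- W1 * D1 = W2 * (D2 * B)
  have hWD : W1 * Matrix.diagonal d1 = W2 * (Matrix.diagonal d2 * B) := by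
    have h : W1 * Matrix.diagonal d1 * C1ᵀ * C1 = W2 * Matrix.diagonal d2 * C2ᵀ * C1 := by
      rw [heq']
    simp only [Matrix.mul_assoc] at h
    rw [hC1, mul_one] at h
    simpa [hBdef, Matrix.mul_assoc] using h
  -- C1 * D1 = C2 * (D2 * A)
  have hCD : C1 * Matrix.diagonal d1 = C2 * (Matrix.diagonal d2 * A) := by
    have h : C1 * (Matrix.diagonal d1 * W1ᵀ) * W1 = C2 * (Matrix.diagonal d2 * W2ᵀ) * W1 := by
      rw [heqT]
    simp only [Matrix.mul_assoc] at h
    rw [hW1, mul_one] at h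
    simpa [hAdef, Matrix.mul_assoc] using h
  -- A * D1 = D2 * B
  have hAD : A * Matrix.diagonal d1 = Matrix.diagonal d2 * B := by
    have h := congrArg (fun M => W2ᵀ * M) hWD
    simp only [cw2] at h
    rw [hAdef, Matrix.mul_assoc]
    exact h
  -- B * D1 = D2 * A
  have hBD : B * Matrix.diagonal d1 = Matrix.diagonal d2 * A := by
    have h := congrArg (fun M => C2ᵀ * M) hCD
    simp only [cc2] at h
    rw [hBdef, Matrix.mul_assoc]
    exact h
  -- entrywise relations
  have e1 : ∀ i j, A i j * d1 j = d2 i * B i j := by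
    intro i j
    have := congrFun (congrFun hAD i) j
    simpa [Matrix.mul_diagonal, Matrix.diagonal_mul] using this
  have e2 : ∀ i j, B i j * d1 j = d2 i * A i j := by
    intro i j
    have := congrFun (congrFun hBD i) j
    simpa [Matrix.mul_diagonal, Matrix.diagonal_mul] using this
  have hzero : ∀ i j, A i j ≠ 0 → d2 i = d1 j := by
    intro i j hA
    have h : A i j * (d1 j * d1 j) = A i j * (d2 i * d2 i) := by
      have h1 := e1 i j
      have h2 := e2 i j
      linear_combination d1 j * h1 + d2 i * h2
    have h3 := mul_left_cancel₀ hA h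
    exact (mul_self_inj (hd2pos i).le (hd1pos j).le).mp h3.symm
  have hBA : B = A := by
    ext i j
    by_cases hA : A i j = 0
    · have := e2 i j
      rw [hA, mul_zero] at this
      have := mul_eq_zero.mp this
      rcases this with h | h
      · rw [hA, h]
      · exact absurd h (ne_of_gt (hd1pos j))
    · have hd := hzero i j hA
      have := e1 i j
      rw [hd] at this
      rw [mul_comm (d1 j) (B i j)] at this
      exact (mul_right_cancel₀ (ne_of_gt (hd1pos j)) this.symm)
  -- AᵀA = 1
  have hAtA : Aᵀ * A = 1 := by
    have h := congrArg (fun M => Mᵀ * M) hWD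
    simp only [Matrix.transpose_mul, Matrix.diagonal_transpose, Matrix.mul_assoc] at h
    -- h : D1 * (W1ᵀ * (W1 * D1)) = Bᵀ * (D2 * (W2ᵀ * (W2 * (D2 * B))))
    rw [cw1, cw2] at h
    -- h : D1 * D1 = Bᵀ * (D2 * (D2 * B))
    rw [← hAD] at h
    -- h : D1 * D1 = Bᵀ * (D2 * (A * D1))
    have hT : Matrix.diagonal d1 * Aᵀ = Bᵀ * Matrix.diagonal d2 := by
      have h' := congrArg Matrix.transpose hAD
      simpa [Matrix.transpose_mul, Matrix.diagonal_transpose] using h'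
    rw [← Matrix.mul_assoc Bᵀ (Matrix.diagonal d2) (A * Matrix.diagonal d1), ← hT] at h
    -- h : D1 * D1 = D1 * Aᵀ * (A * D1)
    simp only [Matrix.mul_assoc] at h
    -- h : D1 * D1 = D1 * (Aᵀ * (A * D1))
    ext i j
    have hij := congrFun (congrFun h i) j
    rw [show Aᵀ * (A * Matrix.diagonal d1) = (Aᵀ * A) * Matrix.diagonal d1 from
      (Matrix.mul_assoc _ _ _).symm] at hij
    rw [Matrix.diagonal_mul_diagonal] at hij
    rw [Matrix.diagonal_mul, Matrix.mul_diagonal] at hij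
    by_cases hij' : i = j
    · subst hij'
      rw [Matrix.diagonal_apply_eq] at hij
      have : (Aᵀ * A) i i = 1 := by
        have h1 := mul_left_cancel₀ (hd1pos i).ne' hij
        have h2 : (Aᵀ * A) i i * d1 i = 1 * d1 i := by rw [one_mul]; exact h1.symm
        exact mul_right_cancel₀ (hd1pos i).ne' h2
      rw [this, Matrix.one_apply_eq]
    · rw [Matrix.diagonal_apply_ne _ hij'] at hij
      have : (Aᵀ * A) i j = 0 := by
        rcases mul_eq_zero.mp hij.symm with h' | h'
        · exact absurd h' (hd1pos i).ne'
        · rcases mul_eq_zero.mp h' with h'' | h''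
          · exact h''
          · exact absurd h'' (hd1pos j).ne'
      rw [this, Matrix.one_apply_ne hij']
  obtain ⟨hdd, hAoff, hAsign⟩ :=
    aux_sign_perm A d1 d2 hdec1 hdec2 hAtA hzero
  set ε : Fin r → ℝ := fun i => A i i with hεdef
  have hAdiag : A = Matrix.diagonal ε := by
    ext i j
    by_cases hij : i = j
    · subst hij; rw [Matrix.diagonal_apply_eq]
    · rw [Matrix.diagonal_apply_ne _ hij, hAoff i j hij]
  have hDinv : Matrix.diagonal d1 * Matrix.diagonal (fun k => (d1 k)⁻¹)
      = (1 : Matrix (Fin r) (Fin r) ℝ) := by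
    rw [Matrix.diagonal_mul_diagonal]
    rw [show (fun k => d1 k * (d1 k)⁻¹) = fun _ => (1:ℝ) from
      funext fun k => mul_inv_cancel₀ (hd1pos k).ne']
    exact Matrix.diagonal_one
  have hcomm : Matrix.diagonal d2 * Matrix.diagonal ε
      = Matrix.diagonal ε * Matrix.diagonal d1 := by
    rw [Matrix.diagonal_mul_diagonal, Matrix.diagonal_mul_diagonal, ← hdd]
    exact congrArg Matrix.diagonal (funext fun k => mul_comm (d1 k) (ε k))
  refine ⟨by rw [hD1, hD2, hdd], ε, hAsign, ?_, ?_⟩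
  · have h : W1 * Matrix.diagonal d1 = W2 * Matrix.diagonal ε * Matrix.diagonal d1 := by
      rw [hWD, hBA, hAdiag, hcomm, ← Matrix.mul_assoc]
    calc W1 = W1 * (Matrix.diagonal d1 * Matrix.diagonal (fun k => (d1 k)⁻¹)) := by
              rw [hDinv, Matrix.mul_one]
      _ = W1 * Matrix.diagonal d1 * Matrix.diagonal (fun k => (d1 k)⁻¹) := by
              rw [Matrix.mul_assoc]
      _ = W2 * Matrix.diagonal ε * Matrix.diagonal d1 * Matrix.diagonal (fun k => (d1 k)⁻¹) := by
              rw [h]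
      _ = W2 * Matrix.diagonal ε := by
              rw [Matrix.mul_assoc (W2 * Matrix.diagonal ε), hDinv, Matrix.mul_one]
  · have h : C1 * Matrix.diagonal d1 = C2 * Matrix.diagonal ε * Matrix.diagonal d1 := by
      rw [hCD, hAdiag, hcomm, ← Matrix.mul_assoc]
    calc C1 = C1 * (Matrix.diagonal d1 * Matrix.diagonal (fun k => (d1 k)⁻¹)) := by
              rw [hDinv, Matrix.mul_one]
      _ = C1 * Matrix.diagonal d1 * Matrix.diagonal (fun k => (d1 k)⁻¹) := by
              rw [Matrix.mul_assoc]
      _ = C2 * Matrix.diagonal ε * Matrix.diagonal d1 * Matrix.diagonal (fun k => (d1 k)⁻¹) := by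
              rw [h]
      _ = C2 * Matrix.diagonal ε := by
              rw [Matrix.mul_assoc (C2 * Matrix.diagonal ε), hDinv, Matrix.mul_one]
end
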